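/- For every g = ((a,b),(c,d)) in GL(2,K) with det g ∈ kˣ, one has ι(g)ᵀ · J · ι(g) = det(g) · J. Consequently ι restricts to an injective group homomorphism from H into G = GSp(4,k) whose similitude factor is λ(ι(g)) = det g. -/

import Mathlib

open Matrix

/-- The standard symplectic matrix `J = ((0,E₂),(−E₂,0))` of `GSp(4)`. -/
def J4 (k : Type*) [Field k] : Matrix (Fin 4) (Fin 4) k :=
  !![0, 0, 1, 0; 0, 0, 0, 1; -1, 0, 0, 0; 0, -1, 0, 0]

/-- Membership in `G = GSp(4,k)`: an invertible matrix `g` with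
`gᵀ J g = λ(g)·J` for some `λ(g) ∈ kˣ`. -/
def IsGSp {k : Type*} [Field k] (g : Matrix (Fin 4) (Fin 4) k) : Prop :=
  IsUnit g.det ∧ ∃ lam : k, lam ≠ 0 ∧ gᵀ * J4 k * g = lam • J4 k

/-- The embedding `ι : H → GL(4,k)`, written in terms of the coefficient
functions `c1, c2 : K → k` giving the expansion `x = c1 x + c2 x · √α`. -/
def iota {k K : Type*} [Field k] [Field K] (α : k) (c1 c2 : K → k)
    (m : Matrix (Fin 2) (Fin 2) K) : Matrix (Fin 4) (Fin 4) k :=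
  !![c1 (m 0 0), c2 (m 0 0) * α, c1 (m 0 1), c2 (m 0 1);
     c2 (m 0 0), c1 (m 0 0), c2 (m 0 1), c1 (m 0 1) / α;
     c1 (m 1 0), c2 (m 1 0) * α, c1 (m 1 1), c2 (m 1 1);
     c2 (m 1 0) * α, c1 (m 1 0) * α, c2 (m 1 1) * α, c1 (m 1 1)]

/-- Membership in `H = {g ∈ GL(2,K) : det g ∈ kˣ}`. -/
def InH {k K : Type*} [Field k] [Field K] [Algebra k K]
    (m : Matrix (Fin 2) (Fin 2) K) : Prop :=
  ∃ d : k, d ≠ 0 ∧ m.det = algebraMap k K d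


private lemma iotaAux {k : Type*} [Field k] (α a1 a2 b1 b2 cc1 cc2 d1 d2 d : k)
    (hα : α ≠ 0)
    (hd1 : a1 * d1 + α * a2 * d2 - (b1 * cc1 + α * b2 * cc2) = d)
    (hd2 : a1 * d2 + a2 * d1 - (b1 * cc2 + b2 * cc1) = 0) :
    (!![a1, a2 * α, b1, b2;
        a2, a1, b2, b1 / α;
        cc1, cc2 * α, d1, d2;
        cc2 * α, cc1 * α, d2 * α, d1])ᵀ * J4 k
      * !![a1, a2 * α, b1, b2;
           a2, a1, b2, b1 / α;
           cc1, cc2 * α, d1, d2;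
           cc2 * α, cc1 * α, d2 * α, d1] = d • J4 k := by
  ext i j
  fin_cases i <;> fin_cases j <;>
    (simp [J4, Matrix.mul_apply, Fin.sum_univ_four, Matrix.transpose_apply,
       Matrix.vecHead, Matrix.vecTail]; try field_simp) <;>
    first
      | ring1
      | linear_combination hd1
      | linear_combination hd2
      | linear_combination α * hd2
      | linear_combination -hd1
      | linear_combination -hd2
      | linear_combination -(α * hd2)
      | linear_combination α * hd1
      | linear_combination -(α * hd1)


set_option maxHeartbeats 1000000 in
private lemma iotaMulAux {k : Type*} [Field k]
    (α A1 A2 B1 B2 C1 C2 D1 D2 E1 E2 F1 F2 G1 G2 H1 H2 : k) (hα : α ≠ 0) :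
    !![A1, A2 * α, B1, B2; A2, A1, B2, B1 / α;
       C1, C2 * α, D1, D2; C2 * α, C1 * α, D2 * α, D1] *
    !![E1, E2 * α, F1, F2; E2, E1, F2, F1 / α;
       G1, G2 * α, H1, H2; G2 * α, G1 * α, H2 * α, H1] =
    !![A1 * E1 + α * A2 * E2 + (B1 * G1 + α * B2 * G2),
       (A1 * E2 + A2 * E1 + (B1 * G2 + B2 * G1)) * α,
       A1 * F1 + α * A2 * F2 + (B1 * H1 + α * B2 * H2),
       A1 * F2 + A2 * F1 + (B1 * H2 + B2 * H1);
       A1 * E2 + A2 * E1 + (B1 * G2 + B2 * G1),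
       A1 * E1 + α * A2 * E2 + (B1 * G1 + α * B2 * G2),
       A1 * F2 + A2 * F1 + (B1 * H2 + B2 * H1),
       (A1 * F1 + α * A2 * F2 + (B1 * H1 + α * B2 * H2)) / α;
       C1 * E1 + α * C2 * E2 + (D1 * G1 + α * D2 * G2),
       (C1 * E2 + C2 * E1 + (D1 * G2 + D2 * G1)) * α,
       C1 * F1 + α * C2 * F2 + (D1 * H1 + α * D2 * H2),
       C1 * F2 + C2 * F1 + (D1 * H2 + D2 * H1);
       (C1 * E2 + C2 * E1 + (D1 * G2 + D2 * G1)) * α,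
       (C1 * E1 + α * C2 * E2 + (D1 * G1 + α * D2 * G2)) * α,
       (C1 * F2 + C2 * F1 + (D1 * H2 + D2 * H1)) * α,
       C1 * F1 + α * C2 * F2 + (D1 * H1 + α * D2 * H2)] := by
  ext i j
  fin_cases i <;> fin_cases j <;>
    (simp [Matrix.mul_apply, Fin.sum_univ_four, Matrix.vecHead, Matrix.vecTail];
     try field_simp) <;>
    try ring1

set_option maxHeartbeats 2000000 in
/-- For every `g ∈ GL(2,K)` with `det g ∈ kˣ`, one has
`ι(g)ᵀ · J · ι(g) = det(g) · J`; consequently `ι` restricts to an injective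
group homomorphism from `H` into `G = GSp(4,k)` with similitude factor
`λ(ι(g)) = det g`. -/
theorem statement0
    {k K : Type*} [Field k] [Field K] [Algebra k K]
    (hchar : (2 : k) ≠ 0)
    (α : k) (hα : α ≠ 0) (hns : ¬ IsSquare α)
    (r : K) (hr : r * r = algebraMap k K α)
    (c1 c2 : K → k)
    (hrepr : ∀ x : K, x = algebraMap k K (c1 x) + algebraMap k K (c2 x) * r)
    (hindep : ∀ y1 y2 : k, algebraMap k K y1 + algebraMap k K y2 * r = 0 →
      y1 = 0 ∧ y2 = 0) :
    (∀ (g : Matrix (Fin 2) (Fin 2) K) (d : k), d ≠ 0 → g.det = algebraMap k K d →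
        (iota α c1 c2 g)ᵀ * J4 k * iota α c1 c2 g = d • J4 k ∧ IsGSp (iota α c1 c2 g))
    ∧ iota α c1 c2 (1 : Matrix (Fin 2) (Fin 2) K) = 1
    ∧ (∀ g h : Matrix (Fin 2) (Fin 2) K, InH (k := k) g → InH (k := k) h →
        iota α c1 c2 (g * h) = iota α c1 c2 g * iota α c1 c2 h)
    ∧ (∀ g h : Matrix (Fin 2) (Fin 2) K, InH (k := k) g → InH (k := k) h →
        iota α c1 c2 g = iota α c1 c2 h → g = h) := by
  -- uniqueness of coefficients
  have huniq : ∀ (x : K) (y1 y2 : k),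
      x = algebraMap k K y1 + algebraMap k K y2 * r → c1 x = y1 ∧ c2 x = y2 := by
    intro x y1 y2 h
    have h0 := hindep (c1 x - y1) (c2 x - y2) (by
      simp only [map_sub]; linear_combination h - hrepr x)
    exact ⟨sub_eq_zero.mp h0.1, sub_eq_zero.mp h0.2⟩
  have hkey : ∀ x y : K, x * y = algebraMap k K (c1 x * c1 y + α * c2 x * c2 y)
      + algebraMap k K (c1 x * c2 y + c2 x * c1 y) * r := by
    intro x y
    conv_lhs => rw [hrepr x, hrepr y]
    simp only [map_add, _root_.map_mul]
    linear_combination (algebraMap k K (c2 x) * algebraMap k K (c2 y)) * hr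
  have hkeyE : ∀ x y : K, x * y = algebraMap k K (c1 x) * algebraMap k K (c1 y)
      + algebraMap k K α * algebraMap k K (c2 x) * algebraMap k K (c2 y)
      + (algebraMap k K (c1 x) * algebraMap k K (c2 y)
        + algebraMap k K (c2 x) * algebraMap k K (c1 y)) * r := by
    intro x y
    have := hkey x y
    simp only [map_add, _root_.map_mul] at this
    linear_combination this
  have hm1 : ∀ x y : K, c1 (x * y) = c1 x * c1 y + α * c2 x * c2 y :=
    fun x y => (huniq _ _ _ (hkey x y)).1
  have hm2 : ∀ x y : K, c2 (x * y) = c1 x * c2 y + c2 x * c1 y :=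
    fun x y => (huniq _ _ _ (hkey x y)).2
  have haux : ∀ x y : K, c1 (x + y) = c1 x + c1 y ∧ c2 (x + y) = c2 x + c2 y := by
    intro x y
    refine huniq _ _ _ ?_
    simp only [map_add]; linear_combination hrepr x + hrepr y
  have ha1 : ∀ x y : K, c1 (x + y) = c1 x + c1 y := fun x y => (haux x y).1
  have ha2 : ∀ x y : K, c2 (x + y) = c2 x + c2 y := fun x y => (haux x y).2
  have h1c : c1 (1 : K) = 1 ∧ c2 (1 : K) = 0 := huniq 1 1 0 (by simp)
  have h0c : c1 (0 : K) = 0 ∧ c2 (0 : K) = 0 := huniq 0 0 0 (by simp)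
  -- main similitude computation
  have main : ∀ (g : Matrix (Fin 2) (Fin 2) K) (d : k), g.det = algebraMap k K d →
      (iota α c1 c2 g)ᵀ * J4 k * iota α c1 c2 g = d • J4 k := by
    intro g d hdet
    have hDet : g.det = g 0 0 * g 1 1 - g 0 1 * g 1 0 := Matrix.det_fin_two g
    have hcomb : algebraMap k K (c1 (g 0 0) * c1 (g 1 1) + α * c2 (g 0 0) * c2 (g 1 1)
          - (c1 (g 0 1) * c1 (g 1 0) + α * c2 (g 0 1) * c2 (g 1 0)) - d)
        + algebraMap k K (c1 (g 0 0) * c2 (g 1 1) + c2 (g 0 0) * c1 (g 1 1)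
          - (c1 (g 0 1) * c2 (g 1 0) + c2 (g 0 1) * c1 (g 1 0))) * r = 0 := by
      simp only [map_sub, map_add, _root_.map_mul]
      linear_combination hkeyE (g 0 1) (g 1 0) - hkeyE (g 0 0) (g 1 1) + hdet - hDet
    obtain ⟨e1, e2⟩ := hindep _ _ hcomb
    have hd1 : c1 (g 0 0) * c1 (g 1 1) + α * c2 (g 0 0) * c2 (g 1 1)
        - (c1 (g 0 1) * c1 (g 1 0) + α * c2 (g 0 1) * c2 (g 1 0)) = d := by
      linear_combination e1
    have hd2 : c1 (g 0 0) * c2 (g 1 1) + c2 (g 0 0) * c1 (g 1 1)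
        - (c1 (g 0 1) * c2 (g 1 0) + c2 (g 0 1) * c1 (g 1 0)) = 0 := e2
    exact iotaAux α (c1 (g 0 0)) (c2 (g 0 0)) (c1 (g 0 1)) (c2 (g 0 1))
      (c1 (g 1 0)) (c2 (g 1 0)) (c1 (g 1 1)) (c2 (g 1 1)) d hα hd1 hd2
  refine ⟨?_, ?_, ?_, ?_⟩
  · intro g d hd hdet
    have hmain := main g d hdet
    refine ⟨hmain, ?_, d, hd, hmain⟩
    have hJ : (J4 k).det = 1 := by
      simp [J4, Matrix.det_succ_row_zero, Fin.sum_univ_succ]; rfl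
    have h2 := congrArg Matrix.det hmain
    rw [Matrix.det_mul, Matrix.det_mul, Matrix.det_transpose, Matrix.det_smul, hJ] at h2
    simp only [Fintype.card_fin, mul_one] at h2
    have hne : (iota α c1 c2 g).det ≠ 0 := by
      intro h
      rw [h, mul_zero] at h2
      exact pow_ne_zero 4 hd h2.symm
    exact isUnit_iff_ne_zero.mpr hne
  · ext i j
    fin_cases i <;> fin_cases j <;>
      simp [iota, Matrix.one_apply, Matrix.vecHead, Matrix.vecTail,
        h1c.1, h1c.2, h0c.1, h0c.2]
  · intro g h _ _
    have e : ∀ i j, (g * h) i j = g i 0 * h 0 j + g i 1 * h 1 j := by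
      intro i j; simp [Matrix.mul_apply, Fin.sum_univ_two]
    have hc1 : ∀ i j, c1 ((g * h) i j) =
        c1 (g i 0) * c1 (h 0 j) + α * c2 (g i 0) * c2 (h 0 j)
          + (c1 (g i 1) * c1 (h 1 j) + α * c2 (g i 1) * c2 (h 1 j)) := by
      intro i j; rw [e, ha1, hm1, hm1]
    have hc2 : ∀ i j, c2 ((g * h) i j) =
        c1 (g i 0) * c2 (h 0 j) + c2 (g i 0) * c1 (h 0 j)
          + (c1 (g i 1) * c2 (h 1 j) + c2 (g i 1) * c1 (h 1 j)) := by
      intro i j; rw [e, ha2, hm2, hm2]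
    have hprod := iotaMulAux α (c1 (g 0 0)) (c2 (g 0 0)) (c1 (g 0 1)) (c2 (g 0 1))
      (c1 (g 1 0)) (c2 (g 1 0)) (c1 (g 1 1)) (c2 (g 1 1))
      (c1 (h 0 0)) (c2 (h 0 0)) (c1 (h 0 1)) (c2 (h 0 1))
      (c1 (h 1 0)) (c2 (h 1 0)) (c1 (h 1 1)) (c2 (h 1 1)) hα
    show iota α c1 c2 (g * h) = _
    rw [show iota α c1 c2 g * iota α c1 c2 h = _ from hprod]
    ext i j
    fin_cases i <;> fin_cases j <;>
      simp [iota, Matrix.vecHead, Matrix.vecTail, hc1, hc2]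
  · intro g h _ _ heq
    have E : ∀ i j, iota α c1 c2 g i j = iota α c1 c2 h i j := fun i j => by rw [heq]
    have entry : ∀ x y : K, c1 x = c1 y → c2 x = c2 y → x = y := by
      intro x y e1 e2; rw [hrepr x, hrepr y, e1, e2]
    ext i j
    fin_cases i <;> fin_cases j
    · exact entry _ _ (by simpa [iota] using E 0 0) (by simpa [iota] using E 1 0)
    · exact entry _ _ (by simpa [iota] using E 0 2) (by simpa [iota] using E 0 3)
    · exact entry _ _ (by simpa [iota] using E 2 0)
        (mul_right_cancel₀ hα (by simpa [iota] using E 3 0))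
    · exact entry _ _ (by simpa [iota] using E 2 2) (by simpa [iota] using E 2 3)
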